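/- For every d ≥ 4 there exists a d×d correlation matrix that is an extreme point of the set of correlation matrices and has rank at least 2; consequently the set {X ⪰ 0 : X_{ii} = 1 ∀i} is not equal to the convex hull of its rank-one elements when d ≥ 4. -/

import Mathlib

open Matrix BigOperators Complex ComplexOrder

noncomputable section

variable {ι : Type*} [Fintype ι] [DecidableEq ι]

/-- A density matrix: positive semidefinite with unit trace. -/
def IsDensityMatrix (ρ : Matrix ι ι ℂ) : Prop := ρ.PosSemidef ∧ ρ.trace = 1

/-- The rank-one projector |ψ⟩⟨ψ| associated to a vector. -/
def pureState (ψ : ι → ℂ) : Matrix ι ι ℂ := Matrix.of fun i j => ψ i * (starRingEnd ℂ) (ψ j)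

/-- The trace norm ‖A‖₁ = Tr √(AᴴA). -/
def traceNorm (A : Matrix ι ι ℂ) : ℝ :=
  (((Matrix.posSemidef_conjTranspose_mul_self A).1.eigenvectorUnitary.1 *
    diagonal (((↑) : ℝ → ℂ) ∘ (√·) ∘ (Matrix.posSemidef_conjTranspose_mul_self A).1.eigenvalues) *
    (star (Matrix.posSemidef_conjTranspose_mul_self A).1.eigenvectorUnitary : Matrix ι ι ℂ)).trace).re

open Classical in
/-- Matrix square root (junk value 0 on matrices that are not PSD). -/
def matSqrt (A : Matrix ι ι ℂ) : Matrix ι ι ℂ := if h : A.PosSemidef then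
  h.1.eigenvectorUnitary.1 * diagonal (((↑) : ℝ → ℂ) ∘ (√·) ∘ h.1.eigenvalues) *
    (star h.1.eigenvectorUnitary : Matrix ι ι ℂ) else 0

/-- Fidelity F(ρ,σ) = ‖√ρ√σ‖₁². -/
def fidelity (ρ σ : Matrix ι ι ℂ) : ℝ := (traceNorm (matSqrt ρ * matSqrt σ))^2

/-- The dephasing map Δ, keeping only the diagonal. -/
def deph (ρ : Matrix ι ι ℂ) : Matrix ι ι ℂ := Matrix.diagonal (fun i => ρ i i)

/-- The m-distillation norm ‖ψ‖_{[m]} = min_x (‖ψ-x‖₁ + √m ‖x‖₂). -/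
def distNorm (m : ℕ) (ψ : ι → ℂ) : ℝ :=
  ⨅ x : ι → ℂ, ((∑ i, ‖ψ i - x i‖) +
    Real.sqrt m * Real.sqrt (∑ i, (‖x i‖)^2))

/-- M_m: convex combinations of pure states with ℓ∞ norm at most 1/√m. -/
def Mset (m : ℕ) : Set (Matrix ι ι ℂ) :=
  {ω | ∃ (n : ℕ) (p : Fin n → ℝ) (ψ : Fin n → ι → ℂ),
    (∀ i, 0 ≤ p i) ∧ (∑ i, p i = 1) ∧
    (∀ i, ∑ j, (‖ψ i j‖)^2 = 1) ∧
    (∀ i j, ‖ψ i j‖ ≤ 1 / Real.sqrt m) ∧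
    ω = ∑ i, p i • pureState (ψ i)}

/-- N_m: density matrices with all diagonal entries at most 1/m. -/
def Nset (m : ℕ) : Set (Matrix ι ι ℂ) :=
  {ω | IsDensityMatrix ω ∧ ∀ i, (ω i i).re ≤ 1 / m}

/-- Optimal fidelity of assisted distillation F_A(ρ,m) = max_{ω ∈ M_m} F(ρ,ω). -/
def FA (ρ : Matrix ι ι ℂ) (m : ℕ) : ℝ :=
  sSup {r : ℝ | ∃ ω ∈ Mset (ι := ι) m, r = fidelity ρ ω}

namespace St2

lemma Hzero {d : ℕ} (i0 i1 i2 i3 : Fin d)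
    (hv0 : i0.val = 0) (hv1 : i1.val = 1) (hv2 : i2.val = 2) (hv3 : i3.val = 3)
    (s : ℂ) (hs0 : s ≠ 0) (hsc : (starRingEnd ℂ) s = s)
    (H : Matrix (Fin d) (Fin d) ℂ)
    (herm : ∀ i j, H j i = (starRingEnd ℂ) (H i j))
    (hdiag : ∀ i, H i i = 0)
    (h1 : ∀ i, H i i0 + H i i1 = s * H i i2)
    (h2 : ∀ i, H i i0 + I * H i i1 = s * H i i3)
    (h3 : ∀ i j, 4 ≤ j.val → H i j = H i i0) : H = 0 := by
  set c := starRingEnd ℂ with hc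
  set a := H i0 i1 with ha
  -- basic entries
  have e02 : s * H i0 i2 = a := by have := h1 i0; rw [hdiag i0] at this; linear_combination -this
  have e03 : s * H i0 i3 = I * a := by have := h2 i0; rw [hdiag i0] at this; linear_combination -this
  have e12 : s * H i1 i2 = c a := by
    have := h1 i1; rw [hdiag i1, herm i0 i1] at this; linear_combination -this
  have e13 : s * H i1 i3 = c a := by
    have := h2 i1; rw [hdiag i1, herm i0 i1] at this; linear_combination -this
  -- a = -conj a
  have eq1 : a = - c a := by
    have h21 : H i2 i1 = - H i2 i0 := by
      have := h1 i2; rw [hdiag i2] at this; linear_combination this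
    have hl : s * H i2 i1 = a := by
      rw [show s * H i2 i1 = c (s * H i1 i2) by rw [_root_.map_mul, hsc, ← herm i1 i2],
        e12]
      exact Complex.conj_conj _
    have hl0 : s * H i2 i0 = c a := by
      rw [show s * H i2 i0 = c (s * H i0 i2) by rw [_root_.map_mul, hsc, ← herm i0 i2], e02]
    have : s * H i2 i1 = -(s * H i2 i0) := by linear_combination s * h21
    rw [hl, hl0] at this; exact this
  -- a = conj a
  have eq2 : a = c a := by
    have h31 : I * H i3 i1 = - H i3 i0 := by
      have := h2 i3; rw [hdiag i3] at this; linear_combination this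
    have hr : s * H i3 i1 = a := by
      rw [show s * H i3 i1 = c (s * H i1 i3) by rw [_root_.map_mul, hsc, ← herm i1 i3], e13]
      exact Complex.conj_conj _
    have key : I * a = - (s * H i3 i0) := by rw [← hr]; linear_combination s * h31
    have h30 : s * H i3 i0 = - I * c a := by
      rw [show s * H i3 i0 = c (s * H i0 i3) by rw [_root_.map_mul, hsc, ← herm i0 i3], e03,
        _root_.map_mul]
      simp [hc]
    rw [h30] at key
    have : I * a = I * c a := by linear_combination key
    exact mul_left_cancel₀ Complex.I_ne_zero this
  have hca : c a = 0 := by linear_combination (eq1 - eq2) / 2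
  have ha0 : a = 0 := by
    have := congrArg c hca
    rwa [hc, Complex.conj_conj, map_zero] at this
  -- row i0 is zero
  have row0 : ∀ j, H i0 j = 0 := by
    intro j
    rcases Nat.lt_or_ge j.val 4 with hj | hj
    · interval_cases hjv : j.val
      · have : j = i0 := Fin.ext (by omega); rw [this]; exact hdiag i0
      · have : j = i1 := Fin.ext (by omega); rw [this]; exact ha0
      · have : j = i2 := Fin.ext (by omega); rw [this]
        have := e02; rw [ha0] at this
        exact (mul_eq_zero.mp this).resolve_left hs0
      · have : j = i3 := Fin.ext (by omega); rw [this]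
        have := e03; rw [ha0, mul_zero] at this
        exact (mul_eq_zero.mp this).resolve_left hs0
    · rw [h3 i0 j hj, hdiag i0]
  have col0 : ∀ i, H i i0 = 0 := fun i => by rw [herm i0 i, row0 i, map_zero]
  -- row i1 is zero
  have row1 : ∀ j, H i1 j = 0 := by
    intro j
    rcases Nat.lt_or_ge j.val 4 with hj | hj
    · interval_cases hjv : j.val
      · have : j = i0 := Fin.ext (by omega); rw [this]; exact col0 i1
      · have : j = i1 := Fin.ext (by omega); rw [this]; exact hdiag i1
      · have : j = i2 := Fin.ext (by omega); rw [this]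
        have := e12; rw [ha0, map_zero] at this
        exact (mul_eq_zero.mp this).resolve_left hs0
      · have : j = i3 := Fin.ext (by omega); rw [this]
        have := e13; rw [ha0, map_zero] at this
        exact (mul_eq_zero.mp this).resolve_left hs0
    · rw [h3 i1 j hj, col0 i1]
  have col1 : ∀ i, H i i1 = 0 := fun i => by rw [herm i1 i, row1 i, map_zero]
  have col2 : ∀ i, H i i2 = 0 := by
    intro i
    have := h1 i; rw [col0 i, col1 i, add_zero] at this
    exact (mul_eq_zero.mp this.symm).resolve_left hs0
  have col3 : ∀ i, H i i3 = 0 := by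
    intro i
    have := h2 i; rw [col0 i, col1 i, mul_zero, add_zero] at this
    exact (mul_eq_zero.mp this.symm).resolve_left hs0
  ext i j
  rcases Nat.lt_or_ge j.val 4 with hj | hj
  · interval_cases hjv : j.val
    · have : j = i0 := Fin.ext (by omega); rw [this]; exact col0 i
    · have : j = i1 := Fin.ext (by omega); rw [this]; exact col1 i
    · have : j = i2 := Fin.ext (by omega); rw [this]; exact col2 i
    · have : j = i3 := Fin.ext (by omega); rw [this]; exact col3 i
  · simp only [Matrix.zero_apply]; rw [h3 i j hj, col0 i]



variable (d : ℕ)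

def sC : ℂ := ((Real.sqrt 2 : ℝ) : ℂ)

lemma sC_mul_self : sC * sC = 2 := by
  rw [sC, ← Complex.ofReal_mul, Real.mul_self_sqrt (by norm_num)]; norm_num

lemma sC_ne_zero : sC ≠ 0 := Complex.ofReal_ne_zero.mpr (by positivity)

lemma sC_conj : (starRingEnd ℂ) sC = sC := Complex.conj_ofReal _

def w0 : Fin d → ℂ := fun j =>
  if j.val = 1 then 0 else if j.val = 2 ∨ j.val = 3 then sC⁻¹ else 1

def w1 : Fin d → ℂ := fun j =>
  if j.val = 1 then 1 else if j.val = 2 then sC⁻¹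
  else if j.val = 3 then I * sC⁻¹ else 0

def V : Matrix (Fin 2) (Fin d) ℂ := Matrix.of ![w0 d, w1 d]

def X : Matrix (Fin d) (Fin d) ℂ := (V d)ᴴ * (V d)

lemma X_apply (i j : Fin d) :
    X d i j = (starRingEnd ℂ) (w0 d i) * w0 d j + (starRingEnd ℂ) (w1 d i) * w1 d j := by
  simp [X, V, mul_apply, Fin.sum_univ_two, conjTranspose_apply]

lemma inv_sC_mul : sC⁻¹ * sC⁻¹ = 2⁻¹ := by
  rw [← mul_inv, sC_mul_self]

lemma conj_inv_sC : (starRingEnd ℂ) sC⁻¹ = sC⁻¹ := by rw [map_inv₀, sC_conj]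

lemma X_diag (j : Fin d) : X d j j = 1 := by
  rw [X_apply, w0, w1]
  by_cases h1 : j.val = 1
  · simp [h1]
  · by_cases h2 : j.val = 2
    · norm_num [h1, h2, sC_conj]
      linear_combination 2 * inv_sC_mul
    · by_cases h3 : j.val = 3
      · norm_num [h1, h2, h3, sC_conj, Complex.conj_I]
        linear_combination 2 * inv_sC_mul - sC⁻¹ * sC⁻¹ * Complex.I_mul_I
      · norm_num [h1, h2, h3]


section Kernel

variable {d : ℕ}

lemma V_mulVec_u1 (i0 i1 i2 : Fin d) (hv0 : i0.val = 0) (hv1 : i1.val = 1) (hv2 : i2.val = 2) :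
    V d *ᵥ (Pi.single i0 1 + Pi.single i1 1 - Pi.single i2 sC) = 0 := by
  funext r
  simp only [mulVec_add, mulVec_sub, mulVec_single, Pi.add_apply, Pi.sub_apply, Pi.zero_apply]
  fin_cases r <;>
    simp [V, w0, w1, hv0, hv1, hv2, inv_mul_cancel₀ sC_ne_zero]

lemma V_mulVec_u2 (i0 i1 i3 : Fin d) (hv0 : i0.val = 0) (hv1 : i1.val = 1) (hv3 : i3.val = 3) :
    V d *ᵥ (Pi.single i0 1 + Pi.single i1 I - Pi.single i3 sC) = 0 := by
  funext r
  simp only [mulVec_add, mulVec_sub, mulVec_single, Pi.add_apply, Pi.sub_apply, Pi.zero_apply]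
  fin_cases r <;>
    simp [V, w0, w1, hv0, hv1, hv3, inv_mul_cancel₀ sC_ne_zero,
      mul_inv_cancel_right₀ sC_ne_zero] <;>
    rw [mul_assoc, inv_mul_cancel₀ sC_ne_zero, mul_one, sub_self]

lemma V_mulVec_u3 (i0 j : Fin d) (hv0 : i0.val = 0) (hj : 4 ≤ j.val) :
    V d *ᵥ (Pi.single i0 1 - Pi.single j 1) = 0 := by
  have hj1 : ¬ j.val = 1 := by omega
  have hj2 : ¬ j.val = 2 := by omega
  have hj3 : ¬ j.val = 3 := by omega
  funext r
  simp only [mulVec_sub, mulVec_single, Pi.sub_apply, Pi.zero_apply]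
  fin_cases r <;> simp [V, w0, w1, hv0, hj1, hj2, hj3]

lemma X_mulVec_zero {u : Fin d → ℂ} (hu : V d *ᵥ u = 0) : X d *ᵥ u = 0 := by
  rw [X, ← mulVec_mulVec, hu, mulVec_zero]

end Kernel

section Rank

variable {d : ℕ}

lemma X_apply_01 (i0 i1 : Fin d) (hv0 : i0.val = 0) (hv1 : i1.val = 1) :
    X d i0 i1 = 0 := by
  simp [X_apply, w0, w1, hv0, hv1]

lemma rank_X (hd : 4 ≤ d) : 2 ≤ (X d).rank := by
  classical
  have h04 : (0:ℕ) < d := by omega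
  have h14 : (1:ℕ) < d := by omega
  set i0 : Fin d := ⟨0, h04⟩
  set i1 : Fin d := ⟨1, h14⟩
  set f : Fin 2 → (Fin d → ℂ) := ![fun i => X d i i0, fun i => X d i i1] with hf
  have hli : LinearIndependent ℂ f := by
    rw [linearIndependent_fin2]
    constructor
    · intro h
      have := congrFun h i1
      rw [hf] at this
      simp only [Matrix.cons_val_one, Matrix.head_cons, Matrix.cons_val_zero, Pi.zero_apply] at this
      rw [X_diag] at this
      exact one_ne_zero this
    · intro a h
      have := congrFun h i0
      rw [hf] at this
      simp only [Matrix.cons_val_one, Matrix.head_cons, Matrix.cons_val_zero,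
        Pi.smul_apply, smul_eq_mul] at this
      rw [X_apply_01 i0 i1 rfl rfl, X_diag, mul_zero] at this
      exact zero_ne_one this
  have hmem : ∀ k, f k ∈ LinearMap.range (X d).mulVecLin := by
    intro k
    fin_cases k
    · exact ⟨Pi.single i0 1, by funext i; simp [mulVecLin_apply, mulVec_single, hf]⟩
    · exact ⟨Pi.single i1 1, by funext i; simp [mulVecLin_apply, mulVec_single, hf]⟩
  set g : Fin 2 → LinearMap.range (X d).mulVecLin := fun k => ⟨f k, hmem k⟩ with hg
  have hlig : LinearIndependent ℂ g := by
    apply LinearIndependent.of_comp (LinearMap.range (X d).mulVecLin).subtype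
    exact hli
  have := hlig.fintype_card_le_finrank
  simpa [Matrix.rank] using this

end Rank


section Extreme

variable {d : ℕ}

lemma psd_dot_zero {Y : Matrix (Fin d) (Fin d) ℂ} {Z : Matrix (Fin d) (Fin d) ℂ}
    (hY : Y.PosSemidef) (hZ : Z.PosSemidef) {p q : ℝ} (hp : 0 < p) (hq : 0 < q)
    (hXeq : p • Y + q • Z = X d) {u : Fin d → ℂ} (hu : X d *ᵥ u = 0) :
    Y *ᵥ u = 0 := by
  have hcombo : p • (star u ⬝ᵥ Y *ᵥ u) + q • (star u ⬝ᵥ Z *ᵥ u) = 0 := by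
    have h0 : star u ⬝ᵥ ((p • Y + q • Z) *ᵥ u) = 0 := by rw [hXeq, hu, dotProduct_zero]
    simpa [add_mulVec, smul_mulVec, dotProduct_add, dotProduct_smul] using h0
  have hα := hY.dotProduct_mulVec_nonneg u
  have hβ := hZ.dotProduct_mulVec_nonneg u
  set α := star u ⬝ᵥ Y *ᵥ u with hαdef
  set β := star u ⬝ᵥ Z *ᵥ u with hβdef
  have hαre : 0 ≤ α.re ∧ α.im = 0 := by
    have := Complex.le_def.mp hα; simpa using ⟨this.1, this.2.symm⟩
  have hβre : 0 ≤ β.re ∧ β.im = 0 := by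
    have := Complex.le_def.mp hβ; simpa using ⟨this.1, this.2.symm⟩
  have hre : p * α.re + q * β.re = 0 := by
    have := congrArg Complex.re hcombo
    simpa [Complex.real_smul, Complex.mul_re] using this
  have hα0 : α = 0 := by
    apply Complex.ext
    · simp only [Complex.zero_re]
      nlinarith [hαre.1, hβre.1]
    · simp [hαre.2]
  exact (hY.dotProduct_mulVec_zero_iff u).mp hα0

lemma X_extreme (hd : 4 ≤ d) :
    X d ∈ Set.extremePoints ℝ
      {Y : Matrix (Fin d) (Fin d) ℂ | Y.PosSemidef ∧ ∀ i, Y i i = 1} := by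
  refine mem_extremePoints.mpr ⟨⟨posSemidef_conjTranspose_mul_self _, X_diag d⟩, ?_⟩
  rintro Y hY Z hZ ⟨p, q, hp, hq, hpq, hXeq⟩
  set i0 : Fin d := ⟨0, by omega⟩
  set i1 : Fin d := ⟨1, by omega⟩
  set i2 : Fin d := ⟨2, by omega⟩
  set i3 : Fin d := ⟨3, by omega⟩
  set H := Y - X d with hHdef
  have key : ∀ u : Fin d → ℂ, V d *ᵥ u = 0 → H *ᵥ u = 0 := by
    intro u hu
    have hXu := X_mulVec_zero hu
    have hYu := psd_dot_zero hY.1 hZ.1 hp hq hXeq hXu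
    rw [hHdef, sub_mulVec, hYu, hXu, sub_self]
  have hHherm : H.IsHermitian :=
    hY.1.1.sub (posSemidef_conjTranspose_mul_self (V d)).1
  have hH0 : H = 0 := by
    apply Hzero i0 i1 i2 i3 rfl rfl rfl rfl sC sC_ne_zero sC_conj
    · intro i j; exact (hHherm.apply j i).symm
    · intro i; simp [hHdef, hY.2 i, X_diag]
    · intro i
      have := congrFun (key _ (V_mulVec_u1 i0 i1 i2 rfl rfl rfl)) i
      simp only [mulVec_add, mulVec_sub, mulVec_single, Pi.add_apply, Pi.sub_apply,
        Pi.zero_apply, Pi.smul_apply, op_smul_eq_mul, Matrix.col_apply, mul_one] at this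
      linear_combination this
    · intro i
      have := congrFun (key _ (V_mulVec_u2 i0 i1 i3 rfl rfl rfl)) i
      simp only [mulVec_add, mulVec_sub, mulVec_single, Pi.add_apply, Pi.sub_apply,
        Pi.zero_apply, Pi.smul_apply, op_smul_eq_mul, Matrix.col_apply, mul_one] at this
      linear_combination this
    · intro i j hj
      have := congrFun (key _ (V_mulVec_u3 i0 j rfl hj)) i
      simp only [mulVec_sub, mulVec_single, Pi.sub_apply, Pi.zero_apply, Pi.smul_apply, op_smul_eq_mul, Matrix.col_apply, mul_one] at this
      linear_combination -this
  have hYX : Y = X d := by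
    have := hH0
    rw [hHdef, sub_eq_zero] at this
    exact this
  refine ⟨hYX, ?_⟩
  have hq0 : q • Z = q • X d := by
    have h1 : p • Y + q • Z = X d := hXeq
    rw [hYX] at h1
    have h2 : q • Z = X d - p • X d := eq_sub_of_add_eq' h1
    have h3 : q • Z = (1 - p) • X d := by rw [h2, sub_smul, one_smul]
    rw [h3]
    congr 1
    linarith
  exact smul_right_injective _ (ne_of_gt hq) hq0

end Extreme

lemma pureState_rank_le {d : ℕ} (v : Fin d → ℂ) :
    (_root_.pureState v).rank ≤ 1 := by
  have heq : (_root_.pureState v)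
      = Matrix.replicateCol (Fin 1) v * Matrix.replicateRow (Fin 1) (fun j => (starRingEnd ℂ) (v j)) := by
    ext i j
    simp [_root_.pureState, Matrix.mul_apply, Matrix.replicateCol, Matrix.replicateRow]
  rw [heq]
  calc (Matrix.replicateCol (Fin 1) v * Matrix.replicateRow (Fin 1) fun j => (starRingEnd ℂ) (v j)).rank
      ≤ (Matrix.replicateCol (Fin 1) v).rank := Matrix.rank_mul_le_left _ _
    _ ≤ Fintype.card (Fin 1) := Matrix.rank_le_card_width _
    _ = 1 := by simp


end St2

theorem stmt2 (d : ℕ) (hd : 4 ≤ d) :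
    (∃ X : Matrix (Fin d) (Fin d) ℂ,
      X ∈ Set.extremePoints ℝ {Y : Matrix (Fin d) (Fin d) ℂ | Y.PosSemidef ∧ ∀ i, Y i i = 1} ∧
      2 ≤ X.rank) ∧
    {Y : Matrix (Fin d) (Fin d) ℂ | Y.PosSemidef ∧ ∀ i, Y i i = 1} ≠
      convexHull ℝ {Y : Matrix (Fin d) (Fin d) ℂ |
        ∃ v : Fin d → ℂ, (∀ i, ‖v i‖ = 1) ∧ Y = pureState v} := by
  have hex : ∃ X : Matrix (Fin d) (Fin d) ℂ,
      X ∈ Set.extremePoints ℝ {Y : Matrix (Fin d) (Fin d) ℂ | Y.PosSemidef ∧ ∀ i, Y i i = 1} ∧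
      2 ≤ X.rank := ⟨St2.X d, St2.X_extreme hd, St2.rank_X hd⟩
  refine ⟨hex, ?_⟩
  intro heq
  obtain ⟨X, hX, hrk⟩ := hex
  rw [heq] at hX
  have hXmem := extremePoints_convexHull_subset hX
  obtain ⟨v, hv, rfl⟩ := hXmem
  have := St2.pureState_rank_le v
  omega

end
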